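/- Let λ ≥ 2 and h ≥ 1 be coprime integers, where λ is not a power of a single prime, let a : ℕ → ℂ be λ-automatic and multiplicative, and let χ : ℕ → ℂ be a Dirichlet character of modulus hλ such that a(n) = χ(n) for all n ≥ 1 coprime to hλ. Let p be a prime dividing λ and set α = ν_p(hλ). Suppose χ_p is a Dirichlet character of modulus p^α and χ' is a Dirichlet character of modulus hλ/p^α with χ(n) = χ_p(n)·χ'(n) for all n, and let m be an integer with m ≡ 1 (mod p^α) and m ≡ p (mod hλ/p^α). Then the sequence n ↦ χ_p(n / p^{ν_p(n)}) · a(p^{ν_p(n)}) / χ(m)^{ν_p(n)} is periodic on the positive integers. -/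
import Mathlib


/-- A sequence `f : ℕ → ℂ` is `lam`-automatic if its `lam`-kernel is finite. -/
def IsAutomatic (lam : ℕ) (f : ℕ → ℂ) : Prop :=
  {g : ℕ → ℂ | ∃ k r : ℕ, r < lam ^ k ∧ g = fun n => f (lam ^ k * n + r)}.Finite

/-- A sequence is multiplicative if `f 1 = 1` and `f (m*n) = f m * f n` for coprime `m n ≥ 1`. -/
def IsMultiplicativeSeq (f : ℕ → ℂ) : Prop :=
  f 1 = 1 ∧ ∀ m n : ℕ, 1 ≤ m → 1 ≤ n → Nat.Coprime m n → f (m * n) = f m * f n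

/-- Eventually periodic sequence. -/
def EventuallyPeriodicSeq (f : ℕ → ℂ) : Prop :=
  ∃ d : ℕ, 1 ≤ d ∧ ∃ n₀ : ℕ, ∀ n ≥ n₀, f (n + d) = f n

/-- A Dirichlet character of modulus `k`: `k`-periodic, completely multiplicative,
and vanishing exactly at arguments not coprime to `k`. -/
def IsDirichletCharacterSeq (k : ℕ) (χ : ℕ → ℂ) : Prop :=
  (∀ n : ℕ, χ (n + k) = χ n) ∧ (∀ m n : ℕ, χ (m * n) = χ m * χ n) ∧
    (∀ n : ℕ, χ n = 0 ↔ 1 < Nat.gcd n k)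

private lemma char_add_mul {k : ℕ} {f : ℕ → ℂ} (hper : ∀ n, f (n + k) = f n) (x t : ℕ) :
    f (x + k * t) = f x := by
  induction t with
  | zero => simp
  | succ t ih =>
      have hx : x + k * (t + 1) = (x + k * t) + k := by ring
      rw [hx, hper, ih]

private lemma char_modeq {k : ℕ} (hk : k ≠ 0) {f : ℕ → ℂ} (hper : ∀ n, f (n + k) = f n)
    {x y : ℕ} (hxy : x ≡ y [MOD k]) : f x = f y := by
  have hgen : ∀ z : ℕ, f z = f (z % k) := by
    intro z
    conv_lhs => rw [← Nat.mod_add_div z k]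
    exact char_add_mul hper _ _
  rw [hgen x, hgen y]
  exact congrArg f hxy

private lemma char_one {k : ℕ} {f : ℕ → ℂ} (hf : IsDirichletCharacterSeq k f) : f 1 = 1 := by
  have h0 : f 1 ≠ 0 := by
    rw [ne_eq, hf.2.2]
    simp [Nat.gcd_one_left]
  have h1 : f 1 * f 1 = f 1 * 1 := by
    rw [mul_one]
    conv_rhs => rw [show (1 : ℕ) = 1 * 1 by norm_num, hf.2.1]
  exact mul_left_cancel₀ h0 h1

private lemma char_pow {k : ℕ} {f : ℕ → ℂ} (hf : IsDirichletCharacterSeq k f) (x e : ℕ) :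
    f (x ^ e) = f x ^ e := by
  induction e with
  | zero => simpa using char_one hf
  | succ e ih => rw [pow_succ, pow_succ, hf.2.1, ih]

private lemma coprime_of_modeq {x y q : ℕ} (hxy : x ≡ y [MOD q]) (h : Nat.Coprime y q) :
    Nat.Coprime x q := by
  have h1 : Nat.gcd q x = Nat.gcd q y := by
    rw [Nat.gcd_rec q x, Nat.gcd_rec q y, (hxy : x % q = y % q)]
  have h2 : Nat.gcd y q = 1 := h
  rw [Nat.Coprime, Nat.gcd_comm, h1, Nat.gcd_comm]
  exact h2

theorem stmt_14 (lam h : ℕ) (hlam : 2 ≤ lam) (hh : 1 ≤ h)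
    (hcop : Nat.Coprime h lam)
    (hnotpp : ¬ ∃ (p k : ℕ), p.Prime ∧ lam = p ^ k)
    (a : ℕ → ℂ) (haut : IsAutomatic lam a) (ha : IsMultiplicativeSeq a)
    (χ : ℕ → ℂ) (hχ : IsDirichletCharacterSeq (h * lam) χ)
    (haχ : ∀ n : ℕ, 1 ≤ n → Nat.Coprime n (h * lam) → a n = χ n)
    (p : ℕ) (hp : p.Prime) (hpl : p ∣ lam)
    (α : ℕ) (hα : α = padicValNat p (h * lam))
    (χp : ℕ → ℂ) (hχp : IsDirichletCharacterSeq (p ^ α) χp)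
    (χ' : ℕ → ℂ) (hχ' : IsDirichletCharacterSeq ((h * lam) / p ^ α) χ')
    (hsplit : ∀ n : ℕ, χ n = χp n * χ' n)
    (m : ℕ) (hm1 : m ≡ 1 [MOD p ^ α]) (hm2 : m ≡ p [MOD (h * lam) / p ^ α]) :
    ∃ d : ℕ, 1 ≤ d ∧ ∀ n : ℕ, 1 ≤ n →
      χp ((n + d) / p ^ padicValNat p (n + d)) * a (p ^ padicValNat p (n + d)) /
          (χ m) ^ padicValNat p (n + d) =
        χp (n / p ^ padicValNat p n) * a (p ^ padicValNat p n) /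
          (χ m) ^ padicValNat p n := by
  haveI fp : Fact p.Prime := ⟨hp⟩
  have hp2 : 2 ≤ p := hp.two_le
  have hpne : p ≠ 0 := by omega
  have hh0 : h ≠ 0 := by omega
  have hl0 : lam ≠ 0 := by omega
  have hp1' : ¬ p ∣ 1 := by rw [Nat.dvd_one]; omega
  have hph : ¬ p ∣ h := by
    intro hd
    have h1 : p ∣ Nat.gcd h lam := Nat.dvd_gcd hd hpl
    rw [hcop] at h1
    rw [Nat.dvd_one] at h1
    omega
  have hαl : α = padicValNat p lam := by
    rw [hα, padicValNat.mul hh0 hl0, padicValNat.eq_zero_of_not_dvd hph, zero_add]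
  have hα1 : 1 ≤ α := by
    by_contra hc
    have h0 : padicValNat p lam = 0 := by omega
    have h1 := pow_succ_padicValNat_not_dvd (p := p) hl0
    rw [h0, pow_one] at h1
    exact h1 hpl
  have hpalam : p ^ α ∣ lam := by rw [hαl]; exact pow_padicValNat_dvd
  obtain ⟨Q, hlamQ⟩ := hpalam
  have hQ0 : Q ≠ 0 := by
    intro h0; rw [h0, mul_zero] at hlamQ; exact hl0 hlamQ
  have hpQ : ¬ p ∣ Q := by
    intro hd
    have h1 : p ^ (α + 1) ∣ lam := by
      rw [hlamQ, pow_succ]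
      exact mul_dvd_mul_left _ hd
    rw [hαl] at h1
    exact pow_succ_padicValNat_not_dvd hl0 h1
  have hQ2 : 2 ≤ Q := by
    rcases Nat.lt_or_ge Q 2 with hq | hq
    · have hq1 : Q = 1 := by omega
      exfalso
      exact hnotpp ⟨p, α, hp, by rw [hlamQ, hq1, mul_one]⟩
    · exact hq
  have hcophQ : Nat.Coprime h Q :=
    Nat.Coprime.coprime_dvd_right ⟨p ^ α, by rw [hlamQ]; ring⟩ hcop
  have hcopph : Nat.Coprime p h := (hp.coprime_iff_not_dvd).mpr hph
  have hcoppQ : Nat.Coprime p Q := (hp.coprime_iff_not_dvd).mpr hpQ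
  have hcopQp : Nat.Coprime Q p := hcoppQ.symm
  have hMQ : h * lam / p ^ α = h * Q := by
    rw [hlamQ, show h * (p ^ α * Q) = p ^ α * (h * Q) by ring]
    exact Nat.mul_div_cancel_left _ (pow_pos hp.pos α)
  rw [hMQ] at hχ' hm2
  have hHQ0 : h * Q ≠ 0 := Nat.mul_ne_zero hh0 hQ0
  have hpα0 : p ^ α ≠ 0 := pow_ne_zero _ hpne
  -- character basics
  have hχp1 : χp 1 = 1 := char_one hχp
  have hχ'1 : χ' 1 = 1 := char_one hχ'
  have hχpmod : ∀ {x y : ℕ}, x ≡ y [MOD p ^ α] → χp x = χp y :=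
    fun hxy => char_modeq hpα0 hχp.1 hxy
  have hχ'modeq : ∀ {x y : ℕ}, x ≡ y [MOD h * Q] → χ' x = χ' y :=
    fun hxy => char_modeq hHQ0 hχ'.1 hxy
  have hχ'p_ne : χ' p ≠ 0 := by
    intro h0
    have h1 := (hχ'.2.2 p).mp h0
    have hco : Nat.Coprime p (h * Q) := Nat.Coprime.mul_right hcopph hcoppQ
    rw [hco] at h1
    omega
  have hωχ'p : χ m = χ' p := by
    rw [hsplit m, hχpmod hm1, hχp1, hχ'modeq hm2, one_mul]
  have hωne : χ m ≠ 0 := by rw [hωχ'p]; exact hχ'p_ne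
  -- pigeonhole on the kernel
  set d0 := (p * h).totient with hd0def
  have hd0pos : 0 < d0 := Nat.totient_pos.mpr (by positivity)
  have hcopQph : Nat.Coprime Q (p * h) := Nat.Coprime.mul_right hcopQp hcophQ.symm
  set S := {g : ℕ → ℂ | ∃ k r : ℕ, r < lam ^ k ∧ g = fun n => a (lam ^ k * n + r)} with hSdef
  have hfin : S.Finite := haut
  haveI hfin' : Finite ↥S := hfin
  have hmem : ∀ j : ℕ,
      (fun n => a (lam ^ ((j + 1) * d0) * n + p ^ (α * ((j + 1) * d0)))) ∈ S := by
    intro j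
    refine ⟨(j + 1) * d0, p ^ (α * ((j + 1) * d0)), ?_, rfl⟩
    set K := (j + 1) * d0 with hKdef
    have hK1 : 1 ≤ K := by
      have : 1 * 1 ≤ (j + 1) * d0 := Nat.mul_le_mul (by omega) hd0pos
      omega
    have hQK : 2 ≤ Q ^ K := by
      calc 2 = 2 ^ 1 := by norm_num
        _ ≤ 2 ^ K := Nat.pow_le_pow_right (by norm_num) hK1
        _ ≤ Q ^ K := Nat.pow_le_pow_left hQ2 K
    calc p ^ (α * K) = p ^ (α * K) * 1 := by ring
      _ < p ^ (α * K) * Q ^ K := by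
          exact mul_lt_mul_of_pos_left (by omega) (pow_pos hp.pos _)
      _ = lam ^ K := by rw [hlamQ, mul_pow, ← pow_mul]
  obtain ⟨i, j, hij, hfeq⟩ := Finite.exists_ne_map_eq_of_infinite
    (fun j : ℕ => (⟨_, hmem j⟩ : ↥S))
  obtain ⟨k, k', hk1, hklt, hd0T, hEq⟩ :
      ∃ k k' : ℕ, 1 ≤ k ∧ k < k' ∧ d0 ∣ k' - k ∧
        ∀ n, a (lam ^ k * n + p ^ (α * k)) = a (lam ^ k' * n + p ^ (α * k')) := by
    have hfeq' := congrArg Subtype.val hfeq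
    simp only at hfeq'
    rcases Nat.lt_or_ge i j with hlt | hge
    · refine ⟨(i + 1) * d0, (j + 1) * d0, ?_, ?_, ?_, fun n => congrFun hfeq' n⟩
      · have : 1 * 1 ≤ (i + 1) * d0 := Nat.mul_le_mul (by omega) hd0pos
        omega
      · exact (Nat.mul_lt_mul_right hd0pos).mpr (by omega)
      · rw [← Nat.sub_mul]; exact dvd_mul_left _ _
    · have hlt : j < i := by omega
      refine ⟨(j + 1) * d0, (i + 1) * d0, ?_, ?_, ?_, fun n => (congrFun hfeq' n).symm⟩
      · have : 1 * 1 ≤ (j + 1) * d0 := Nat.mul_le_mul (by omega) hd0pos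
        omega
      · exact (Nat.mul_lt_mul_right hd0pos).mpr (by omega)
      · rw [← Nat.sub_mul]; exact dvd_mul_left _ _
  have hk'1 : 1 ≤ k' := by omega
  set T' := k' - k with hT'def
  have hk'eq : k' = k + T' := by omega
  have hT'1 : 1 ≤ T' := by omega
  have hQT2 : 2 ≤ Q ^ T' := by
    calc 2 = 2 ^ 1 := by norm_num
      _ ≤ 2 ^ T' := Nat.pow_le_pow_right (by norm_num) hT'1
      _ ≤ Q ^ T' := Nat.pow_le_pow_left hQ2 T'
  set D := Q ^ T' - 1 with hDdef
  have hQTD : Q ^ T' = D + 1 := by omega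
  have hD0 : D ≠ 0 := by omega
  have hphD : p * h ∣ D := by
    obtain ⟨t, ht⟩ := hd0T
    have h1 : Q ^ T' ≡ 1 [MOD p * h] := by
      rw [hT'def] at ht ⊢
      rw [ht, pow_mul]
      have h2 := (Nat.ModEq.pow_totient hcopQph).pow t
      simpa using h2
    have h2 := (Nat.modEq_iff_dvd' (by omega : 1 ≤ Q ^ T')).mp h1.symm
    exact h2
  have hpD : p ∣ D := dvd_trans (dvd_mul_right p h) hphD
  have hhD : h ∣ D := dvd_trans (dvd_mul_left h p) hphD
  set E := padicValNat p D with hEdef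
  have hE1 : 1 ≤ E := by
    rw [hEdef]
    exact (padicValNat_dvd_iff_le hD0).mp (by simpa using hpD)
  set D' := D / p ^ E with hD'def
  have hDD' : D = p ^ E * D' := by
    rw [hD'def, hEdef]; exact (Nat.mul_div_cancel' pow_padicValNat_dvd).symm
  have hpD' : ¬ p ∣ D' := by
    intro hd
    have h1 : p ^ (E + 1) ∣ D := by
      rw [hDD', pow_succ]
      exact mul_dvd_mul_left _ hd
    rw [hEdef] at h1
    exact pow_succ_padicValNat_not_dvd hD0 h1
  set ξ := χp (p ^ α * D' - D') with hξdef
  -- the key relation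
  have star : ∀ e v : ℕ, E + α ≤ e → ¬ p ∣ v →
      a (p ^ (α * k + e)) * χp v * χ' p ^ E = a (p ^ (α * k' + E)) * ξ * χ' p ^ e := by
    intro e v hee hv
    have hαe : α ≤ e := by omega
    have he1 : 1 ≤ e := by omega
    have hcoppah : Nat.Coprime (p ^ α) h := Nat.Coprime.pow_left _ hcopph
    obtain ⟨vs, hvs1, hvs2⟩ := Nat.chineseRemainder hcoppah v 1
    have hpvs : ¬ p ∣ vs := by
      intro hd
      have hmodp : vs ≡ v [MOD p] := Nat.ModEq.of_dvd (dvd_pow_self p (by omega)) hvs1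
      have h1 : v ≡ 0 [MOD p] := hmodp.symm.trans (Nat.modEq_zero_iff_dvd.mpr hd)
      exact hv (Nat.modEq_zero_iff_dvd.mp h1)
    set N := p ^ (e + α) * h with hNdef
    have hN0 : N ≠ 0 := Nat.mul_ne_zero (pow_ne_zero _ hpne) hh0
    haveI : NeZero N := ⟨hN0⟩
    have hcopQkN : Nat.Coprime (Q ^ k) N :=
      Nat.Coprime.mul_right (Nat.Coprime.pow _ _ hcopQp) (Nat.Coprime.pow_left _ hcophQ.symm)
    set u : (ZMod N)ˣ := ZMod.unitOfCoprime (Q ^ k) hcopQkN with hudef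
    set z : ZMod N := (↑u⁻¹ : ZMod N) * (((p ^ e * vs : ℕ) : ZMod N) - 1) with hzdef
    set n := z.val with hndef
    set U := Q ^ k * n + 1 with hUdef
    have hUmod : U ≡ p ^ e * vs [MOD N] := by
      have h1 : ((Q ^ k : ℕ) : ZMod N) = (u : ZMod N) := (ZMod.coe_unitOfCoprime _ _).symm
      have h2 : ((n : ℕ) : ZMod N) = z := ZMod.natCast_rightInverse z
      have hcast : ((U : ℕ) : ZMod N) = ((p ^ e * vs : ℕ) : ZMod N) := by
        calc ((U : ℕ) : ZMod N)
            = ((Q ^ k : ℕ) : ZMod N) * ((n : ℕ) : ZMod N) + 1 := by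
              rw [hUdef]; push_cast; ring
          _ = (u : ZMod N) * z + 1 := by rw [h1, h2]
          _ = ((u : ZMod N) * (↑u⁻¹ : ZMod N)) * (((p ^ e * vs : ℕ) : ZMod N) - 1) + 1 := by
              rw [hzdef]; ring
          _ = ((p ^ e * vs : ℕ) : ZMod N) := by
              rw [← Units.val_mul, mul_inv_cancel, Units.val_one, one_mul]; ring
      exact (ZMod.natCast_eq_natCast_iff _ _ _).mp hcast
    have hpe_dvd_N : p ^ e ∣ N := dvd_mul_of_dvd_left (pow_dvd_pow p (by omega)) h
    have hpeU : p ^ e ∣ U := by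
      have h1 : U ≡ 0 [MOD p ^ e] :=
        (Nat.ModEq.of_dvd hpe_dvd_N hUmod).trans (Nat.modEq_zero_iff_dvd.mpr (dvd_mul_right _ _))
      exact Nat.modEq_zero_iff_dvd.mp h1
    set V₁ := U / p ^ e with hV1def
    have hUV1 : U = p ^ e * V₁ := (Nat.mul_div_cancel' hpeU).symm
    have hU0 : U ≠ 0 := by omega
    have hV10 : V₁ ≠ 0 := by
      intro h0; rw [h0, mul_zero] at hUV1; exact hU0 hUV1
    have hV1mod : V₁ ≡ vs [MOD p ^ α * h] := by
      apply Nat.ModEq.mul_left_cancel' (c := p ^ e) (pow_ne_zero _ hpne)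
      rw [← hUV1, show p ^ e * (p ^ α * h) = N by rw [hNdef, pow_add]; ring]
      exact hUmod
    have hpV1 : ¬ p ∣ V₁ := by
      intro hd
      have h1 : V₁ ≡ vs [MOD p] :=
        Nat.ModEq.of_dvd (dvd_mul_of_dvd_left (dvd_pow_self p (by omega)) h) hV1mod
      have h2 : vs ≡ 0 [MOD p] := h1.symm.trans (Nat.modEq_zero_iff_dvd.mpr hd)
      exact hpvs (Nat.modEq_zero_iff_dvd.mp h2)
    have hV1h : V₁ ≡ 1 [MOD h] :=
      (Nat.ModEq.of_dvd (dvd_mul_left h _) hV1mod).trans hvs2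
    have hV1pα : V₁ ≡ v [MOD p ^ α] :=
      (Nat.ModEq.of_dvd (dvd_mul_right _ _) hV1mod).trans hvs1
    have hUQ1 : Nat.Coprime U Q := by
      have hg : Nat.gcd U Q ∣ 1 := by
        have h1 : Nat.gcd U Q ∣ Q ^ k * n :=
          dvd_trans (Nat.gcd_dvd_right U Q) (dvd_mul_of_dvd_left (dvd_pow_self Q (by omega)) n)
        have h3 := Nat.dvd_sub (Nat.gcd_dvd_left U Q) h1
        rwa [show U - Q ^ k * n = 1 by omega] at h3
      exact Nat.dvd_one.mp hg
    have hV1Q : Nat.Coprime V₁ Q :=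
      Nat.Coprime.coprime_dvd_left ⟨p ^ e, by rw [hUV1]; ring⟩ hUQ1
    have hV1hcop : Nat.Coprime V₁ h := coprime_of_modeq hV1h (Nat.coprime_one_left h)
    have hV1p : Nat.Coprime V₁ (p ^ α) :=
      Nat.Coprime.pow_right _ ((hp.coprime_iff_not_dvd).mpr hpV1).symm
    have hV1HL : Nat.Coprime V₁ (h * lam) := by
      rw [hlamQ]
      exact Nat.Coprime.mul_right hV1hcop (Nat.Coprime.mul_right hV1p hV1Q)
    set W := Q ^ k' * n + 1 with hWdef
    have hW0 : W ≠ 0 := by omega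
    have hWU : W = U + D * (Q ^ k * n) := by
      have h1 : Q ^ k' = (D + 1) * Q ^ k := by rw [← hQTD, hk'eq, pow_add]; ring
      rw [hWdef, hUdef, h1]; ring
    have hpEe : p ^ E ∣ p ^ e := pow_dvd_pow p (by omega)
    have hpED : p ^ E ∣ D := by rw [hEdef]; exact pow_padicValNat_dvd
    have hpEW : p ^ E ∣ W := by
      rw [hWU]
      exact dvd_add (dvd_trans hpEe hpeU) (dvd_mul_of_dvd_left hpED _)
    set V₂ := W / p ^ E with hV2def
    have hWV2 : W = p ^ E * V₂ := (Nat.mul_div_cancel' hpEW).symm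
    have hV2eq : V₂ = D' * (Q ^ k * n) + p ^ (e - E) * V₁ := by
      apply Nat.eq_of_mul_eq_mul_left (pow_pos hp.pos E)
      rw [← hWV2, hWU, hUV1, hDD']
      have h1 : p ^ e = p ^ E * p ^ (e - E) := by
        rw [← pow_add]
        congr 1
        omega
      rw [h1]
      ring
    have hpU : p ∣ U := dvd_trans (dvd_pow_self p (by omega : e ≠ 0)) hpeU
    have hpQkn : ¬ p ∣ Q ^ k * n := by
      intro hd
      have h1 := Nat.dvd_sub hpU hd
      rw [show U - Q ^ k * n = 1 by omega] at h1
      exact hp1' h1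
    have hpV2 : ¬ p ∣ V₂ := by
      intro hd
      rw [hV2eq] at hd
      have h1 : p ∣ p ^ (e - E) * V₁ :=
        dvd_mul_of_dvd_left (dvd_pow_self p (by omega : e - E ≠ 0)) _
      have h2 : p ∣ D' * (Q ^ k * n) := (Nat.dvd_add_iff_left h1).mpr hd
      rcases hp.dvd_mul.mp h2 with h3 | h3
      · exact hpD' h3
      · exact hpQkn h3
    have hV20 : V₂ ≠ 0 := fun h0 => hW0 (by rw [hWV2, h0, mul_zero])
    have hξV2 : χp V₂ = ξ := by
      rw [hξdef]
      apply hχpmod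
      apply Nat.ModEq.add_right_cancel' D'
      have hDle : D' ≤ p ^ α * D' := Nat.le_mul_of_pos_left _ (pow_pos hp.pos α)
      rw [show p ^ α * D' - D' + D' = p ^ α * D' by omega]
      have h2 : p ^ α ∣ V₂ + D' := by
        rw [hV2eq, show D' * (Q ^ k * n) + p ^ (e - E) * V₁ + D' = D' * U + p ^ (e - E) * V₁ by
          rw [hUdef]; ring]
        exact dvd_add (dvd_mul_of_dvd_right (dvd_trans (pow_dvd_pow p hαe) hpeU) D')
          (dvd_mul_of_dvd_left (pow_dvd_pow p (by omega : α ≤ e - E)) V₁)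
      exact (Nat.modEq_zero_iff_dvd.mpr h2).trans (Nat.modEq_zero_iff_dvd.mpr (dvd_mul_right _ _)).symm
    have hWQ : Nat.Coprime W Q := by
      have hg : Nat.gcd W Q ∣ 1 := by
        have h1 : Nat.gcd W Q ∣ Q ^ k' * n :=
          dvd_trans (Nat.gcd_dvd_right W Q) (dvd_mul_of_dvd_left (dvd_pow_self Q (by omega)) n)
        have h3 := Nat.dvd_sub (Nat.gcd_dvd_left W Q) h1
        rwa [show W - Q ^ k' * n = 1 by omega] at h3
      exact Nat.dvd_one.mp hg
    have hV2Q : Nat.Coprime V₂ Q :=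
      Nat.Coprime.coprime_dvd_left ⟨p ^ E, by rw [hWV2]; ring⟩ hWQ
    have hUh : U ≡ p ^ e [MOD h] := by
      have h1 : U ≡ p ^ e * vs [MOD h] := Nat.ModEq.of_dvd (dvd_mul_left h _) hUmod
      have h2 : p ^ e * vs ≡ p ^ e * 1 [MOD h] := Nat.ModEq.mul_left _ hvs2
      simpa using h1.trans h2
    have hWh : W ≡ p ^ e [MOD h] := by
      have h1 : W ≡ U + 0 [MOD h] := by
        rw [hWU]
        exact Nat.ModEq.add_left U (Nat.modEq_zero_iff_dvd.mpr (dvd_mul_of_dvd_left hhD _))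
      simpa using h1.trans hUh
    have hV2h : Nat.Coprime V₂ h := by
      have hWhcop : Nat.Coprime W h := coprime_of_modeq hWh (Nat.Coprime.pow_left _ hcopph)
      exact Nat.Coprime.coprime_dvd_left ⟨p ^ E, by rw [hWV2]; ring⟩ hWhcop
    have hV2p : Nat.Coprime V₂ (p ^ α) :=
      Nat.Coprime.pow_right _ ((hp.coprime_iff_not_dvd).mpr hpV2).symm
    have hV2HL : Nat.Coprime V₂ (h * lam) := by
      rw [hlamQ]
      exact Nat.Coprime.mul_right hV2h (Nat.Coprime.mul_right hV2p hV2Q)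
    -- evaluate kernel equation at n
    have hnum1 : lam ^ k * n + p ^ (α * k) = p ^ (α * k + e) * V₁ := by
      rw [hlamQ, mul_pow, ← pow_mul]
      calc p ^ (α * k) * Q ^ k * n + p ^ (α * k) = p ^ (α * k) * U := by rw [hUdef]; ring
        _ = p ^ (α * k) * (p ^ e * V₁) := by rw [← hUV1]
        _ = p ^ (α * k + e) * V₁ := by rw [← mul_assoc, ← pow_add]
    have hnum2 : lam ^ k' * n + p ^ (α * k') = p ^ (α * k' + E) * V₂ := by
      rw [hlamQ, mul_pow, ← pow_mul]
      calc p ^ (α * k') * Q ^ k' * n + p ^ (α * k') = p ^ (α * k') * W := by rw [hWdef]; ring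
        _ = p ^ (α * k') * (p ^ E * V₂) := by rw [← hWV2]
        _ = p ^ (α * k' + E) * V₂ := by rw [← mul_assoc, ← pow_add]
    have heval := hEq n
    rw [hnum1, hnum2] at heval
    rw [ha.2 _ _ (Nat.one_le_iff_ne_zero.mpr (pow_ne_zero _ hpne))
      (Nat.one_le_iff_ne_zero.mpr hV10)
      (Nat.Coprime.pow_left _ ((hp.coprime_iff_not_dvd).mpr hpV1))] at heval
    rw [ha.2 _ _ (Nat.one_le_iff_ne_zero.mpr (pow_ne_zero _ hpne))
      (Nat.one_le_iff_ne_zero.mpr hV20)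
      (Nat.Coprime.pow_left _ ((hp.coprime_iff_not_dvd).mpr hpV2))] at heval
    rw [haχ V₁ (Nat.one_le_iff_ne_zero.mpr hV10) hV1HL,
      haχ V₂ (Nat.one_le_iff_ne_zero.mpr hV20) hV2HL] at heval
    rw [hsplit V₁, hsplit V₂, hχpmod hV1pα, hξV2] at heval
    -- heval : a (p^(αk+e)) * (χp v * χ' V₁) = a (p^(αk'+E)) * (ξ * χ' V₂)
    have hkey : χ' p ^ E * χ' V₂ = χ' p ^ e * χ' V₁ := by
      have h1 : χ' (p ^ E * V₂) = χ' (p ^ e * V₁) := by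
        rw [← hWV2, ← hUV1]
        apply hχ'modeq
        have hUleW : U ≤ W := by omega
        have hdvd : h * Q ∣ W - U := by
          rw [show W - U = D * (Q ^ k * n) by omega]
          exact Nat.Coprime.mul_dvd_of_dvd_of_dvd hcophQ
            (dvd_mul_of_dvd_left hhD _)
            (Dvd.dvd.mul_left (dvd_mul_of_dvd_left (dvd_pow_self Q (by omega : k ≠ 0)) n) D)
        exact ((Nat.modEq_iff_dvd' hUleW).mpr hdvd).symm
      rwa [hχ'.2.1, hχ'.2.1, char_pow hχ', char_pow hχ'] at h1
    have hχ'V1ne : χ' V₁ ≠ 0 := by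
      intro h0
      have h1 := (hχ'.2.2 V₁).mp h0
      have h2 : Nat.Coprime V₁ (h * Q) := Nat.Coprime.mul_right hV1hcop hV1Q
      rw [h2] at h1
      omega
    apply mul_right_cancel₀ hχ'V1ne
    linear_combination (χ' p) ^ E * heval + a (p ^ (α * k' + E)) * ξ * hkey
  -- the final construction, given the dichotomy data
  have final : ∀ L : ℕ,
      ((∀ j, L ≤ j → a (p ^ j) = 0) ∨
        ((∀ x, ¬ p ∣ x → χp x = 1) ∧
          ∀ j₁ j₂ : ℕ, L ≤ j₁ → L ≤ j₂ → a (p ^ j₁) * χ m ^ j₂ = a (p ^ j₂) * χ m ^ j₁)) →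
      ∃ d : ℕ, 1 ≤ d ∧ ∀ n : ℕ, 1 ≤ n →
        χp ((n + d) / p ^ padicValNat p (n + d)) * a (p ^ padicValNat p (n + d)) /
            (χ m) ^ padicValNat p (n + d) =
          χp (n / p ^ padicValNat p n) * a (p ^ padicValNat p n) /
            (χ m) ^ padicValNat p n := by
    intro L hL
    have hnotdvd_div : ∀ x : ℕ, x ≠ 0 → ¬ p ∣ x / p ^ padicValNat p x := by
      intro x hx hd
      set w := padicValNat p x with hwdef
      obtain ⟨c, hc⟩ := hd
      apply pow_succ_padicValNat_not_dvd (p := p) hx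
      refine ⟨c, ?_⟩
      calc x = p ^ w * (x / p ^ w) := (Nat.mul_div_cancel' pow_padicValNat_dvd).symm
        _ = p ^ (w + 1) * c := by rw [hc, pow_succ]; ring
    refine ⟨p ^ (L + α), Nat.one_le_iff_ne_zero.mpr (pow_ne_zero _ hpne), ?_⟩
    intro n hn1
    have hn0 : n ≠ 0 := by omega
    have hnd0 : n + p ^ (L + α) ≠ 0 := by positivity
    set ν := padicValNat p n with hνdef
    by_cases hcase : ν < L
    · have hν' : padicValNat p (n + p ^ (L + α)) = ν := by
        have h1 : p ^ ν ∣ n + p ^ (L + α) :=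
          dvd_add pow_padicValNat_dvd (pow_dvd_pow p (by omega))
        have h2 : ¬ p ^ (ν + 1) ∣ n + p ^ (L + α) := by
          intro hd
          have h3 : p ^ (ν + 1) ∣ p ^ (L + α) := pow_dvd_pow p (by omega)
          have h4 := Nat.dvd_sub hd h3
          rw [Nat.add_sub_cancel] at h4
          exact pow_succ_padicValNat_not_dvd hn0 h4
        have hle := (padicValNat_dvd_iff_le hnd0).mp h1
        have hlt : ¬ (ν + 1 ≤ padicValNat p (n + p ^ (L + α))) :=
          fun hc => h2 ((padicValNat_dvd_iff_le hnd0).mpr hc)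
        omega
      rw [hν']
      obtain ⟨w, hw⟩ := pow_padicValNat_dvd (p := p) (n := n)
      have hdiv1 : n / p ^ ν = w := by
        rw [hw]
        exact Nat.mul_div_cancel_left _ (pow_pos hp.pos _)
      have hd2 : p ^ (L + α) = p ^ ν * (p ^ α * p ^ (L - ν)) := by
        rw [← pow_add, ← pow_add]
        congr 1
        omega
      have hdiv2 : (n + p ^ (L + α)) / p ^ ν = w + p ^ α * p ^ (L - ν) := by
        have h5 : n + p ^ (L + α) = p ^ ν * (w + p ^ α * p ^ (L - ν)) := by
          rw [Nat.mul_add, ← hw, ← hd2]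
        rw [h5, Nat.mul_div_cancel_left _ (pow_pos hp.pos _)]
      rw [hdiv1, hdiv2, char_add_mul hχp.1 w (p ^ (L - ν))]
    · push_neg at hcase
      have hν'L : L ≤ padicValNat p (n + p ^ (L + α)) := by
        apply (padicValNat_dvd_iff_le hnd0).mp
        refine dvd_add (dvd_trans (pow_dvd_pow p hcase) ?_) (pow_dvd_pow p (by omega))
        rw [hνdef]
        exact pow_padicValNat_dvd
      rcases hL with hz | ⟨hB, hcross⟩
      · rw [hz _ hν'L, hz _ hcase]
        simp
      · rw [hB _ (hnotdvd_div _ hnd0), hB _ (hnotdvd_div _ hn0), one_mul, one_mul]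
        rw [div_eq_div_iff (pow_ne_zero _ hωne) (pow_ne_zero _ hωne)]
        exact hcross _ _ hν'L hcase
  have hAk : α * k ≤ α * k' := Nat.mul_le_mul_left _ (le_of_lt hklt)
  by_cases hB : ∀ x : ℕ, ¬ p ∣ x → χp x = 1
  · -- principal case
    refine final (α * k' + E + α) (Or.inr ⟨hB, ?_⟩)
    intro j₁ j₂ h1 h2
    have hs1 := star (j₁ - α * k) 1 (by omega) hp1'
    have hs2 := star (j₂ - α * k) 1 (by omega) hp1'
    rw [hχp1, mul_one, show α * k + (j₁ - α * k) = j₁ by omega] at hs1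
    rw [hχp1, mul_one, show α * k + (j₂ - α * k) = j₂ by omega] at hs2
    rw [hωχ'p]
    have e1 : a (p ^ j₁) * χ' p ^ E * χ' p ^ (j₂ - α * k) =
        a (p ^ (α * k' + E)) * ξ * χ' p ^ ((j₁ - α * k) + (j₂ - α * k)) := by
      rw [pow_add (χ' p) (j₁ - α * k) (j₂ - α * k)]
      linear_combination χ' p ^ (j₂ - α * k) * hs1
    have e2 : a (p ^ j₂) * χ' p ^ E * χ' p ^ (j₁ - α * k) =
        a (p ^ (α * k' + E)) * ξ * χ' p ^ ((j₂ - α * k) + (j₁ - α * k)) := by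
      rw [pow_add (χ' p) (j₂ - α * k) (j₁ - α * k)]
      linear_combination χ' p ^ (j₁ - α * k) * hs2
    rw [show (j₂ - α * k) + (j₁ - α * k) = (j₁ - α * k) + (j₂ - α * k) by omega] at e2
    have e3 : a (p ^ j₁) * χ' p ^ E * χ' p ^ (j₂ - α * k) =
        a (p ^ j₂) * χ' p ^ E * χ' p ^ (j₁ - α * k) := by rw [e1, e2]
    have hj1 : χ' p ^ (j₁ - α * k) * χ' p ^ (α * k) = χ' p ^ j₁ := by
      rw [← pow_add]
      congr 1
      omega
    have hj2 : χ' p ^ (j₂ - α * k) * χ' p ^ (α * k) = χ' p ^ j₂ := by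
      rw [← pow_add]
      congr 1
      omega
    apply mul_right_cancel₀ (pow_ne_zero E hχ'p_ne)
    linear_combination χ' p ^ (α * k) * e3 - a (p ^ j₁) * χ' p ^ E * hj2 +
      a (p ^ j₂) * χ' p ^ E * hj1
  · -- vanishing case
    push_neg at hB
    obtain ⟨v, hv, hvne⟩ := hB
    refine final (α * k' + E + α) (Or.inl ?_)
    intro jj hjj
    have hs1 := star (jj - α * k) v (by omega) hv
    have hs2 := star (jj - α * k) 1 (by omega) hp1'
    rw [show α * k + (jj - α * k) = jj by omega] at hs1 hs2
    rw [hχp1, mul_one] at hs2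
    have h3 : a (p ^ jj) * χ' p ^ E * (χp v - 1) = 0 := by
      linear_combination hs1 - hs2
    rcases mul_eq_zero.mp h3 with h5 | h5
    · rcases mul_eq_zero.mp h5 with h6 | h6
      · exact h6
      · exact absurd h6 (pow_ne_zero _ hχ'p_ne)
    · exact absurd (by linear_combination h5) hvne
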